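/- U² = I if and only if PQ = (1/a)·J, where J is the all-ones A×A matrix. -/

import Mathlib

open Matrix

private lemma expand_aux {A : Type*} [Fintype A] [DecidableEq A] (P Q : Matrix A A ℝ) :
    (2 • P - 1) * (2 • Q - 1) = (4:ℝ)•(P*Q) - (2:ℝ)•P - (2:ℝ)•Q + 1 := by
  have h2 : ∀ R : Matrix A A ℝ, (2:ℕ) • R = (2:ℝ) • R := fun R => by
    rw [← Nat.cast_smul_eq_nsmul ℝ 2 R]; norm_num
  rw [h2, h2, sub_mul, mul_sub, mul_sub, smul_mul_assoc, mul_smul_comm, smul_smul]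
  norm_num
  abel

theorem stmt_15 (A : Type*) [Fintype A] [DecidableEq A] [Nonempty A]
    (P Q : Matrix A A ℝ)
    (hPsymm : Pᵀ = P) (hPidem : P * P = P)
    (hQsymm : Qᵀ = Q) (hQidem : Q * Q = Q)
    (hinter : ∀ x : A → ℝ,
      ((∃ y : A → ℝ, P *ᵥ y = x) ∧ (∃ z : A → ℝ, Q *ᵥ z = x)) ↔
        ∃ c : ℝ, x = fun _ => c)
    (U : Matrix A A ℝ)
    (hU : U = (2 • P - 1) * (2 • Q - 1)) :
    U ^ 2 = 1 ↔ P * Q = ((Fintype.card A : ℝ))⁻¹ • (Matrix.of fun _ _ => 1) := by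
  set S : Matrix A A ℝ := 2 • P - 1 with hS
  set T : Matrix A A ℝ := 2 • Q - 1 with hT
  have hSS : S * S = 1 := by
    rw [hS, expand_aux, hPidem,
      show (4:ℝ)•P = (2:ℝ)•P + (2:ℝ)•P by rw [← add_smul]; norm_num]
    abel
  have hTT : T * T = 1 := by
    rw [hT, expand_aux, hQidem,
      show (4:ℝ)•Q = (2:ℝ)•Q + (2:ℝ)•Q by rw [← add_smul]; norm_num]
    abel
  -- ST = TS ↔ PQ = QP
  have hcomm_iff : S * T = T * S ↔ P * Q = Q * P := by
    rw [hS, hT, expand_aux, expand_aux Q P]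
    constructor
    · intro h
      have h4 : (4:ℝ) • (P * Q) = (4:ℝ) • (Q * P) := by
        apply_fun (fun M => M + (2:ℝ)•P + (2:ℝ)•Q - 1) at h
        have e1 : (4:ℝ)•(P*Q) - (2:ℝ)•P - (2:ℝ)•Q + 1 + (2:ℝ)•P + (2:ℝ)•Q - 1
            = (4:ℝ)•(P*Q) := by abel
        have e2 : (4:ℝ)•(Q*P) - (2:ℝ)•Q - (2:ℝ)•P + 1 + (2:ℝ)•P + (2:ℝ)•Q - 1
            = (4:ℝ)•(Q*P) := by abel
        rwa [e1, e2] at h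
      exact smul_right_injective (Matrix A A ℝ) (by norm_num : (4:ℝ) ≠ 0) h4
    · intro h; rw [h]; abel
  -- U² = 1 ↔ PQ = QP
  have hU2_iff : U ^ 2 = 1 ↔ P * Q = Q * P := by
    rw [← hcomm_iff, hU, pow_two]
    constructor
    · intro h
      have hmid : S * (S * T * (S * T)) * T = S * 1 * T := by rw [h]
      calc S * T = S * 1 * T := by rw [mul_one]
        _ = S * (S * T * (S * T)) * T := hmid.symm
        _ = (S * S) * (T * S) * (T * T) := by noncomm_ring
        _ = T * S := by rw [hSS, hTT, one_mul, mul_one]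
    · intro h
      calc S * T * (S * T) = S * (T * S) * T := by noncomm_ring
        _ = S * (S * T) * T := by rw [h]
        _ = (S * S) * (T * T) := by noncomm_ring
        _ = 1 := by rw [hSS, hTT, one_mul]
  rw [hU2_iff]
  -- constants are fixed by P and Q
  have hPfix : ∀ c : ℝ, P *ᵥ (fun _ => c) = fun _ => c := by
    intro c
    obtain ⟨⟨y, hy⟩, -⟩ := (hinter (fun _ => c)).mpr ⟨c, rfl⟩
    have h1 : P *ᵥ (fun _ => c) = P *ᵥ (P *ᵥ y) := by rw [hy]
    rw [mulVec_mulVec, hPidem, hy] at h1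
    exact h1
  have hQfix : ∀ c : ℝ, Q *ᵥ (fun _ => c) = fun _ => c := by
    intro c
    obtain ⟨-, ⟨z, hz⟩⟩ := (hinter (fun _ => c)).mpr ⟨c, rfl⟩
    have h1 : Q *ᵥ (fun _ => c) = Q *ᵥ (Q *ᵥ z) := by rw [hz]
    rw [mulVec_mulVec, hQidem, hz] at h1
    exact h1
  have hcard : (Fintype.card A : ℝ) ≠ 0 := by
    simp [Fintype.card_ne_zero]
  constructor
  · intro hcomm
    have hMsymm : (P * Q)ᵀ = P * Q := by
      rw [transpose_mul, hPsymm, hQsymm, ← hcomm]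
    -- every column of P*Q is constant
    have hcol : ∀ v : A → ℝ, ∃ c : ℝ, (P * Q) *ᵥ v = fun _ => c := by
      intro v
      apply (hinter ((P * Q) *ᵥ v)).mp
      constructor
      · exact ⟨Q *ᵥ v, by rw [mulVec_mulVec]⟩
      · exact ⟨P *ᵥ v, by rw [mulVec_mulVec, ← hcomm]⟩
    have hentry : ∀ i i' j : A, (P * Q) i j = (P * Q) i' j := by
      intro i i' j
      obtain ⟨c, hc⟩ := hcol (Pi.single j 1)
      have h1 : ((P * Q) *ᵥ Pi.single j 1) i = (P * Q) i j := by
        simp [mulVec_single]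
      have h2 : ((P * Q) *ᵥ Pi.single j 1) i' = (P * Q) i' j := by
        simp [mulVec_single]
      rw [hc] at h1 h2
      rw [← h1, ← h2]
    obtain ⟨i₀⟩ := ‹Nonempty A›
    have hsym : ∀ i j : A, (P * Q) i j = (P * Q) j i := by
      intro i j
      have h := congrFun (congrFun hMsymm i) j
      rw [transpose_apply] at h
      exact h.symm
    have hall : ∀ i j : A, (P * Q) i j = (P * Q) i₀ i₀ := by
      intro i j
      calc (P * Q) i j = (P * Q) i₀ j := hentry i i₀ j
        _ = (P * Q) j i₀ := hsym i₀ j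
        _ = (P * Q) i₀ i₀ := hentry j i₀ i₀
    have hMone : (P * Q) *ᵥ (fun _ => (1:ℝ)) = fun _ => (1:ℝ) := by
      rw [← mulVec_mulVec, hQfix, hPfix]
    have hsum : (Fintype.card A : ℝ) * (P * Q) i₀ i₀ = 1 := by
      have hh := congrFun hMone i₀
      rw [mulVec] at hh
      simp only [dotProduct, mul_one] at hh
      calc (Fintype.card A : ℝ) * (P * Q) i₀ i₀ = ∑ _j : A, (P * Q) i₀ i₀ := by
            rw [Finset.sum_const, nsmul_eq_mul, Fintype.card]
        _ = ∑ j : A, (P * Q) i₀ j := by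
            apply Finset.sum_congr rfl; intro j _; rw [hall i₀ j]
        _ = 1 := hh
    ext i j
    rw [Matrix.smul_apply, of_apply, smul_eq_mul, mul_one, hall i j]
    field_simp at hsum ⊢
    linarith
  · intro h
    have hJ : (((Fintype.card A : ℝ))⁻¹ • (Matrix.of fun _ _ => (1:ℝ)) : Matrix A A ℝ)ᵀ =
        ((Fintype.card A : ℝ))⁻¹ • (Matrix.of fun _ _ => (1:ℝ)) := by
      ext i j; simp
    calc P * Q = ((Fintype.card A : ℝ))⁻¹ • (Matrix.of fun _ _ => 1) := h
      _ = (((Fintype.card A : ℝ))⁻¹ • (Matrix.of fun _ _ => (1:ℝ)) : Matrix A A ℝ)ᵀ := hJ.symm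
      _ = (P * Q)ᵀ := by rw [← h]
      _ = Q * P := by rw [transpose_mul, hPsymm, hQsymm]
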